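/- For the implicit midpoint rule applied to the scalar linear test problem u' = λu with low-precision perturbation, one step of the mixed-precision method with c explicit corrections satisfies u^{n+1} = φ(z) u^n + (z/2)^{c+1}/(1 - z/2) · q, where z = λΔt, φ(z) = (1 + z/2)/(1 - z/2) is the standard implicit midpoint stability function, and q is the (step-dependent) rounding error term; i.e., the coefficient multiplying the rounding error is (z/2)^{c+1}/(1 - z/2). -/
import Mathlib


/-- Mixed-precision implicit midpoint rule with `c` explicit corrections applied to
`u' = λ u` with low-precision perturbation `ε τ`: one step satisfies
`u^{n+1} = φ(z) u^n + (z/2)^(c+1)/(1 - z/2) · q` with `z = λ Δt`, `q = Δt ε τ`. -/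
theorem mixed_precision_IMR_one_step
    (lam dt eps tau u : ℝ) (c : ℕ) (y : ℕ → ℝ)
    (hz : lam * dt ≠ 2)
    (h0 : y 0 = u + dt / 2 * (lam * y 0 + eps * tau))
    (hk : ∀ k < c, y (k + 1) = u + dt / 2 * (lam * y k)) :
    u + dt * (lam * y c) =
      (1 + lam * dt / 2) / (1 - lam * dt / 2) * u +
        (lam * dt / 2) ^ (c + 1) / (1 - lam * dt / 2) * (dt * eps * tau) := by
  have ha : (1 : ℝ) - lam * dt / 2 ≠ 0 := by
    intro h; apply hz; linarith
  have key : ∀ n : ℕ, (∀ k < n, y (k + 1) = u + dt / 2 * (lam * y k)) →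
      y n * (1 - lam * dt / 2) = u + (lam * dt / 2) ^ n * (dt / 2 * (eps * tau)) := by
    intro n
    induction n with
    | zero =>
      intro _
      linear_combination h0
    | succ m ih =>
      intro h
      have hm := ih (fun k hkm => h k (Nat.lt_succ_of_lt hkm))
      have h' := h m (Nat.lt_succ_self m)
      linear_combination (1 - lam * dt / 2) * h' + (lam * dt / 2) * hm
  have keyc := key c hk
  have expand : (1 + lam * dt / 2) / (1 - lam * dt / 2) * u +
      (lam * dt / 2) ^ (c + 1) / (1 - lam * dt / 2) * (dt * eps * tau) =
      ((1 + lam * dt / 2) * u + (lam * dt / 2) ^ (c + 1) * (dt * eps * tau)) /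
        (1 - lam * dt / 2) := by ring
  rw [expand, eq_div_iff ha]
  linear_combination (dt * lam) * keyc
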